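/- arXiv:1408.3364 — 5 statements merged into one kernel-verified Lean document; each statement's English description precedes it below -/
import Mathlib

section
/- Let V be a finite-dimensional complex vector space and W a complex vector space. Suppose U(x) ∈ End(V ⊗ W) depends on a parameter x and there exists an invertible R(x) ∈ End(V ⊗ V) such that R_{00'}(x/y) U_{01}(x) U_{0'1}(y) = U_{0'1}(y) U_{01}(x) R_{00'}(x/y) in End(V ⊗ V ⊗ W) for all x, y in the relevant domain. Then the transfer matrices T(x) := Tr_V U(x) (partial trace over the first factor V) commute: [T(x), T(y)] = 0 for all x, y. -/
open Matrix TensorProduct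

noncomputable section

abbrev Sq (n : ℕ) := Matrix (Fin n × Fin n) (Fin n × Fin n) ℂ

/-- Endomorphisms of `V ⊗ W` (`V = ℂⁿ` finite dimensional) encoded as `n × n` matrices with
entries in `End(W)`. -/
abbrev OpVW (n : ℕ) (W : Type*) [AddCommGroup W] [Module ℂ W] :=
  Matrix (Fin n) (Fin n) (Module.End ℂ W)

/-- Endomorphisms of `V ⊗ V ⊗ W`. -/
abbrev OpVVW (n : ℕ) (W : Type*) [AddCommGroup W] [Module ℂ W] :=
  Matrix (Fin n × Fin n) (Fin n × Fin n) (Module.End ℂ W)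

/-- Embedding a scalar operator on `V ⊗ V` as an operator on `V ⊗ V ⊗ W`. -/
def scalE {n : ℕ} (W : Type*) [AddCommGroup W] [Module ℂ W] (R : Sq n) : OpVVW n W :=
  R.map (algebraMap ℂ (Module.End ℂ W))

/-- `U₀₁`: an operator on `V₍₀₎ ⊗ W` acting trivially on the second auxiliary copy `V₍₀'₎`. -/
def u01 {n : ℕ} {W : Type*} [AddCommGroup W] [Module ℂ W] (U : OpVW n W) : OpVVW n W :=
  Matrix.of fun p q => if p.2 = q.2 then U p.1 q.1 else 0

/-- `U₀'₁`: an operator on `V₍₀'₎ ⊗ W` acting trivially on the first auxiliary copy `V₍₀₎`. -/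
def u0p1 {n : ℕ} {W : Type*} [AddCommGroup W] [Module ℂ W] (U : OpVW n W) : OpVVW n W :=
  Matrix.of fun p q => if p.1 = q.1 then U p.2 q.2 else 0


lemma trace_u01_u0p1 {n : ℕ} {W : Type*} [AddCommGroup W] [Module ℂ W]
    (A B : OpVW n W) : (u01 A * u0p1 B).trace = A.trace * B.trace := by
  classical
  simp only [Matrix.trace, Matrix.diag, Matrix.mul_apply, u01, u0p1, Matrix.of_apply]
  calc (∑ p : Fin n × Fin n, ∑ q : Fin n × Fin n,
        (if p.2 = q.2 then A p.1 q.1 else 0) * if q.1 = p.1 then B q.2 p.2 else 0)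
      = ∑ p : Fin n × Fin n, A p.1 p.1 * B p.2 p.2 := by
        refine Finset.sum_congr rfl fun p _ => ?_
        rw [Finset.sum_eq_single p]
        · simp
        · intro q _ hq
          by_cases h1 : p.2 = q.2
          · by_cases h2 : q.1 = p.1
            · exact absurd (Prod.ext h2 h1.symm) hq
            · simp [h2]
          · simp [h1]
        · intro h; exact absurd (Finset.mem_univ p) h
    _ = (∑ i : Fin n, A i i) * ∑ j : Fin n, B j j := by
        rw [Fintype.sum_prod_type, Finset.sum_mul]
        refine Finset.sum_congr rfl fun i _ => ?_
        rw [Finset.mul_sum]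

lemma trace_u0p1_u01 {n : ℕ} {W : Type*} [AddCommGroup W] [Module ℂ W]
    (A B : OpVW n W) : (u0p1 B * u01 A).trace = B.trace * A.trace := by
  classical
  simp only [Matrix.trace, Matrix.diag, Matrix.mul_apply, u01, u0p1, Matrix.of_apply]
  calc (∑ p : Fin n × Fin n, ∑ q : Fin n × Fin n,
        (if p.1 = q.1 then B p.2 q.2 else 0) * if q.2 = p.2 then A q.1 p.1 else 0)
      = ∑ p : Fin n × Fin n, B p.2 p.2 * A p.1 p.1 := by
        refine Finset.sum_congr rfl fun p _ => ?_
        rw [Finset.sum_eq_single p]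
        · simp
        · intro q _ hq
          by_cases h1 : p.1 = q.1
          · by_cases h2 : q.2 = p.2
            · exact absurd (Prod.ext h1.symm h2) hq
            · simp [h2]
          · simp [h1]
        · intro h; exact absurd (Finset.mem_univ p) h
    _ = (∑ i : Fin n, B i i) * ∑ j : Fin n, A j j := by
        rw [Fintype.sum_prod_type, Finset.sum_comm, Finset.sum_mul]
        refine Finset.sum_congr rfl fun i _ => ?_
        rw [Finset.mul_sum]

lemma trace_scalE_comm {n : ℕ} {W : Type*} [AddCommGroup W] [Module ℂ W]
    (S : Sq n) (X : OpVVW n W) :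
    (scalE W S * X).trace = (X * scalE W S).trace := by
  simp only [Matrix.trace, Matrix.diag, Matrix.mul_apply, scalE, Matrix.map_apply]
  rw [Finset.sum_comm]
  refine Finset.sum_congr rfl fun i _ => Finset.sum_congr rfl fun j _ => ?_
  exact Algebra.commutes (S j i) (X i j)

lemma scalE_mul {n : ℕ} (W : Type*) [AddCommGroup W] [Module ℂ W] (S T : Sq n) :
    scalE W (S * T) = scalE W S * scalE W T :=
  Matrix.map_mul

/-- commuting transfer matrices in the periodic setting. -/
theorem stmt0 (n : ℕ) (W : Type*) [AddCommGroup W] [Module ℂ W]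
    (U : ℂ → OpVW n W) (R : ℂ → Sq n)
    (hRinv : ∀ x : ℂ, IsUnit (R x))
    (hExch : ∀ x y : ℂ,
      scalE W (R (x / y)) * u01 (U x) * u0p1 (U y)
        = u0p1 (U y) * u01 (U x) * scalE W (R (x / y))) :
    ∀ x y : ℂ, (U x).trace * (U y).trace = (U y).trace * (U x).trace := by
  intro x y
  obtain ⟨u, hu⟩ := hRinv (x / y)
  have h1 : scalE W (R (x/y)) * scalE W (↑u⁻¹ : Sq n) = 1 := by
    rw [← scalE_mul, ← hu, Units.mul_inv]
    simp [scalE]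
  have h2 : scalE W (↑u⁻¹ : Sq n) * scalE W (R (x/y)) = 1 := by
    rw [← scalE_mul, ← hu, Units.inv_mul]
    simp [scalE]
  have key : u01 (U x) * u0p1 (U y)
      = scalE W (↑u⁻¹ : Sq n) * (u0p1 (U y) * u01 (U x) * scalE W (R (x/y))) := by
    rw [← hExch x y, ← mul_assoc, ← mul_assoc, h2, one_mul]
  calc (U x).trace * (U y).trace
      = (u01 (U x) * u0p1 (U y)).trace := (trace_u01_u0p1 _ _).symm
    _ = (scalE W (↑u⁻¹ : Sq n) * (u0p1 (U y) * u01 (U x) * scalE W (R (x/y)))).trace := by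
        rw [key]
    _ = ((u0p1 (U y) * u01 (U x) * scalE W (R (x/y))) * scalE W (↑u⁻¹ : Sq n)).trace := by
        rw [trace_scalE_comm]
    _ = (u0p1 (U y) * u01 (U x)).trace := by
        rw [mul_assoc, h1, mul_one]
    _ = (U y).trace * (U x).trace := trace_u0p1_u01 _ _
end
end

section
/- Let V be finite-dimensional with R(x) ∈ End(V ⊗ V) such that R(x)^{t₁} is invertible. Define R̃(x) := ((R(x)^{t₁})^{-1})^{t₁}, and for a parameter-dependent operator Y(x) ∈ End(V) define φ_R(Y)(x) := Tr₀ (Y₀(x) P_{01} R_{01}(x²)) ∈ End(V). Then φ_R is bijective on the space of such parameter-dependent operators, with inverse φ_{R̃}; that is, φ_R(φ_{R̃}(Y)) = Y and φ_{R̃}(φ_R(Y)) = Y. -/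
open Matrix Kronecker

noncomputable section

abbrev MatV (n : ℕ) := Matrix (Fin n) (Fin n) ℂ
/-- The flip operator `P` on `V ⊗ V`. -/
def flipM (n : ℕ) : Sq n := Matrix.of fun p q => if p.1 = q.2 ∧ p.2 = q.1 then (1 : ℂ) else 0

/-- `R₂₁ = P R P`. -/
def swapM {n : ℕ} (R : Sq n) : Sq n := Matrix.of fun p q => R (p.2, p.1) (q.2, q.1)

/-- Partial transpose in the first tensor factor. -/
def pt1 {n : ℕ} (R : Sq n) : Sq n := Matrix.of fun p q => R (q.1, p.2) (p.1, q.2)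

/-- `R̃ = ((R^{t₁})⁻¹)^{t₁}`. -/
def rtil {n : ℕ} (R : Sq n) : Sq n := pt1 (pt1 R)⁻¹

/-- `K ⊗ Id` acting in the first factor. -/
def k1M {n : ℕ} (K : MatV n) : Sq n := Matrix.of fun p q => if p.2 = q.2 then K p.1 q.1 else 0

/-- `Id ⊗ K` acting in the second factor. -/
def k2M {n : ℕ} (K : MatV n) : Sq n := Matrix.of fun p q => if p.1 = q.1 then K p.2 q.2 else 0

/-- Partial trace over the first tensor factor. -/
def ptr0 {n : ℕ} (X : Sq n) : MatV n := Matrix.of fun i j => ∑ a : Fin n, X (a, i) (a, j)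

/-- `φ_R(Y)(x) = Tr₀ (Y₀(x) P₀₁ R₀₁(x²))`. -/
def phiR {n : ℕ} (R : ℂ → Sq n) (K : ℂ → MatV n) : ℂ → MatV n :=
  fun x => ptr0 (k1M (K x) * flipM n * R (x ^ 2))

abbrev Cu (n : ℕ) := Matrix (Fin n × Fin n × Fin n) (Fin n × Fin n × Fin n) ℂ

def e12 {n : ℕ} (R : Sq n) : Cu n :=
  Matrix.of fun p q => if p.2.2 = q.2.2 then R (p.1, p.2.1) (q.1, q.2.1) else 0
def e13 {n : ℕ} (R : Sq n) : Cu n :=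
  Matrix.of fun p q => if p.2.1 = q.2.1 then R (p.1, p.2.2) (q.1, q.2.2) else 0
def e23 {n : ℕ} (R : Sq n) : Cu n :=
  Matrix.of fun p q => if p.1 = q.1 then R (p.2.1, p.2.2) (q.2.1, q.2.2) else 0

/-- The Yang–Baxter equation `R₁₂(x/y) R₁₃(x) R₂₃(y) = R₂₃(y) R₁₃(x) R₁₂(x/y)`. -/
def YBEprop {n : ℕ} (R : ℂ → Sq n) : Prop :=
  ∀ x y : ℂ, e12 (R (x / y)) * e13 (R x) * e23 (R y) = e23 (R y) * e13 (R x) * e12 (R (x / y))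

/-- The left reflection equation. -/
def LREprop {n : ℕ} (R : ℂ → Sq n) (K : ℂ → MatV n) : Prop :=
  ∀ x y : ℂ, R (x / y) * k1M (K x) * swapM (R (x * y)) * k2M (K y)
    = k2M (K y) * R (x * y) * k1M (K x) * swapM (R (x / y))

/-- The right reflection equation. -/
def RREprop {n : ℕ} (R : ℂ → Sq n) (K : ℂ → MatV n) : Prop :=
  ∀ x y : ℂ, swapM (R (x / y)) * k1M (K x) * R (x * y) * k2M (K y)
    = k2M (K y) * swapM (R (x * y)) * k1M (K x) * R (x / y)

/-- The dual reflection equation. -/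
def DREprop {n : ℕ} (R : ℂ → Sq n) (K : ℂ → MatV n) : Prop :=
  ∀ x y : ℂ, (R (x / y))⁻¹ * k1M (K x) * swapM (rtil (R (x * y))) * k2M (K y)
    = k2M (K y) * rtil (R (x * y)) * k1M (K x) * ((swapM (R (x / y)))⁻¹)ᵀ


lemma pt1_pt1 {n : ℕ} (R : Sq n) : pt1 (pt1 R) = R := by
  ext ⟨i, j⟩ ⟨k, l⟩; rfl

lemma phiR_apply {n : ℕ} (R : ℂ → Sq n) (K : ℂ → MatV n) (x : ℂ) (i j : Fin n) :
    phiR R K x i j = ∑ p : Fin n × Fin n, K x p.1 p.2 * pt1 (R (x ^ 2)) p (i, j) := by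
  simp only [phiR, ptr0, Matrix.of_apply, Matrix.mul_apply, k1M, flipM, pt1,
    Fintype.sum_prod_type, ite_and, ite_mul, zero_mul, one_mul]
  simp only [mul_ite, mul_one, mul_zero, Finset.sum_ite_eq', Finset.sum_ite_eq,
    Finset.mem_univ, if_true, ite_mul, zero_mul, Finset.sum_ite_irrel, Finset.sum_const_zero]

lemma comp_sum {n : ℕ} (M N : Sq n) (K : MatV n) (i j : Fin n) :
    (∑ p : Fin n × Fin n, (∑ q : Fin n × Fin n, K q.1 q.2 * M q p) * N p (i, j))
      = ∑ q : Fin n × Fin n, K q.1 q.2 * (M * N) q (i, j) := by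
  simp only [Matrix.mul_apply, Finset.sum_mul, Finset.mul_sum]
  rw [Finset.sum_comm]
  apply Finset.sum_congr rfl
  intro q _
  apply Finset.sum_congr rfl
  intro p _
  ring

lemma id_sum {n : ℕ} (K : MatV n) (i j : Fin n) :
    (∑ q : Fin n × Fin n, K q.1 q.2 * (1 : Sq n) q (i, j)) = K i j := by
  simp [Matrix.one_apply]

/-- `φ_R` is bijective with inverse `φ_{R̃}`. -/
theorem stmt3 (n : ℕ) (R : ℂ → Sq n)
    (hRt1 : ∀ x : ℂ, IsUnit (pt1 (R x))) :
    ∀ (Y : ℂ → MatV n) (x : ℂ),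
      phiR R (phiR (fun t => rtil (R t)) Y) x = Y x ∧
      phiR (fun t => rtil (R t)) (phiR R Y) x = Y x := by
  intro Y x
  have hu : IsUnit (pt1 (R (x ^ 2))).det :=
    (Matrix.isUnit_iff_isUnit_det _).mp (hRt1 (x ^ 2))
  have h1 : (pt1 (R (x ^ 2)))⁻¹ * pt1 (R (x ^ 2)) = 1 := Matrix.nonsing_inv_mul _ hu
  have h2 : pt1 (R (x ^ 2)) * (pt1 (R (x ^ 2)))⁻¹ = 1 := Matrix.mul_nonsing_inv _ hu
  have hr : pt1 (rtil (R (x ^ 2))) = (pt1 (R (x ^ 2)))⁻¹ := pt1_pt1 _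
  constructor <;> ext i j
  · rw [phiR_apply]
    simp only [phiR_apply, hr]
    exact (comp_sum (pt1 (R (x ^ 2)))⁻¹ (pt1 (R (x ^ 2))) (Y x) i j).trans (by rw [h1, id_sum])
  · rw [phiR_apply, hr]
    simp only [phiR_apply]
    exact (comp_sum (pt1 (R (x ^ 2))) (pt1 (R (x ^ 2)))⁻¹ (Y x) i j).trans (by rw [h2, id_sum])
end
end

section
/- Let V be finite-dimensional and let R(x) ∈ End(V ⊗ V) satisfy the Yang-Baxter equation R_{12}(x/y) R_{13}(x) R_{23}(y) = R_{23}(y) R_{13}(x) R_{12}(x/y) and the regularity condition R(1) = c·P for some nonzero constant c, where P is the flip. Then R satisfies the unitarity condition: R(x) R_{21}(1/x) is a scalar multiple of the identity on V ⊗ V, for each x where both are defined. -/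
open Matrix Kronecker

noncomputable section

section helpers
variable {n : ℕ}

lemma mul_e13flip (X : Cu n) :
    X * e13 (flipM n) = Matrix.of fun p q => X p (q.2.2, q.2.1, q.1) := by
  ext p q
  simp only [Matrix.mul_apply, e13, flipM, Matrix.of_apply]
  simp [Fintype.sum_prod_type, ite_and, Finset.sum_ite_eq, Finset.sum_ite_eq']

lemma e13flip_mul (X : Cu n) :
    e13 (flipM n) * X = Matrix.of fun p q => X (p.2.2, p.2.1, p.1) q := by
  ext p q
  simp only [Matrix.mul_apply, e13, flipM, Matrix.of_apply]
  simp [Fintype.sum_prod_type, ite_and, Finset.sum_ite_eq, Finset.sum_ite_eq']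

lemma lhs_entry (A B : Sq n) (p q : Fin n × Fin n × Fin n) :
    (e12 A * e13 (flipM n) * e23 B) p q
      = if p.2.2 = q.1 then (A * swapM B) (p.1, p.2.1) (q.2.2, q.2.1) else 0 := by
  rw [mul_e13flip]
  simp only [Matrix.mul_apply, Matrix.of_apply, e12, e23, swapM,
    Fintype.sum_prod_type, ite_and, Finset.sum_ite_eq, Finset.sum_ite_eq',
    ite_mul, mul_ite, zero_mul, mul_zero, Finset.sum_ite_irrel, Finset.sum_const_zero,
    Finset.mem_univ, if_true]
  split
  · exact Finset.sum_comm
  · rfl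

lemma rhs_entry (A B : Sq n) (p q : Fin n × Fin n × Fin n) :
    (e23 B * e13 (flipM n) * e12 A) p q
      = if p.1 = q.2.2 then (swapM B * A) (p.2.2, p.2.1) (q.1, q.2.1) else 0 := by
  rw [mul_assoc, e13flip_mul]
  simp only [Matrix.mul_apply, Matrix.of_apply, e12, e23, swapM,
    Fintype.sum_prod_type, ite_and, Finset.sum_ite_eq, Finset.sum_ite_eq',
    ite_mul, mul_ite, zero_mul, mul_zero, Finset.sum_ite_irrel, Finset.sum_const_zero,
    Finset.mem_univ, if_true]
  split
  · exact Finset.sum_comm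
  · rfl

lemma e13_smul (c : ℂ) (X : Sq n) : e13 (c • X) = c • e13 X := by
  ext p q
  simp [e13, Matrix.smul_apply]

lemma rel (R : ℂ → Sq n) (hY : YBEprop R) (c : ℂ) (hc : c ≠ 0)
    (hreg : R 1 = c • flipM n) (v : ℂ) (p q : Fin n × Fin n × Fin n) :
    (if p.2.2 = q.1 then (R v⁻¹ * swapM (R v)) (p.1, p.2.1) (q.2.2, q.2.1) else 0)
      = (if p.1 = q.2.2 then (swapM (R v) * R v⁻¹) (p.2.2, p.2.1) (q.1, q.2.1) else 0) := by
  have h := hY 1 v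
  rw [one_div, hreg, e13_smul, mul_smul_comm, smul_mul_assoc,
    mul_smul_comm, smul_mul_assoc] at h
  have h2 := congrFun (congrFun h p) q
  rw [Matrix.smul_apply, Matrix.smul_apply, lhs_entry, rhs_entry] at h2
  exact mul_left_cancel₀ hc h2

lemma bridge (X Y : Sq n) (a b c d : Fin n) :
    (X * swapM Y) (a, b) (c, d) = (swapM X * Y) (b, a) (d, c) := by
  simp only [Matrix.mul_apply, swapM, Matrix.of_apply, Fintype.sum_prod_type]
  exact Finset.sum_comm

end helpers

/-- YBE together with regularity `R(1) ∝ P` implies unitarity: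
`R(x) R₂₁(1/x)` is a scalar multiple of the identity. -/
theorem stmt6 (n : ℕ) (R : ℂ → Sq n)
    (hYBE : YBEprop R)
    (hreg : ∃ c : ℂ, c ≠ 0 ∧ R 1 = c • flipM n) :
    ∀ x : ℂ, ∃ m : ℂ, R x * swapM (R x⁻¹) = m • (1 : Sq n) := by
  obtain ⟨c, hc, hr⟩ := hreg
  intro x
  have S1 : ∀ p q : Fin n × Fin n × Fin n,
      (if p.2.2 = q.1 then (R x * swapM (R x⁻¹)) (p.1, p.2.1) (q.2.2, q.2.1) else 0)
        = (if p.1 = q.2.2 then (swapM (R x⁻¹) * R x) (p.2.2, p.2.1) (q.1, q.2.1) else 0) := by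
    intro p q
    have h := rel R hYBE c hc hr x⁻¹ p q
    rwa [inv_inv] at h
  have S2 := rel R hYBE c hc hr x
  rcases Nat.eq_zero_or_pos n with hn | hn
  · refine ⟨0, ?_⟩
    ext ⟨i, j⟩ q
    exact absurd i.isLt (by omega)
  · set i0 : Fin n := ⟨0, hn⟩
    refine ⟨(R x * swapM (R x⁻¹)) (i0, i0) (i0, i0), ?_⟩
    ext ⟨i, j⟩ ⟨k, l⟩
    rw [Matrix.smul_apply, Matrix.one_apply]
    by_cases hik : i = k
    · subst hik
      by_cases hjl : j = l
      · subst hjl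
        simp only [if_pos rfl, if_true, smul_eq_mul, mul_one]
        have h1 := S1 (i, j, i0) (i0, j, i)
        simp only [if_pos rfl, if_true] at h1
        have h2 := S2 (j, i0, i0) (i0, i0, j)
        simp only [if_pos rfl, if_true] at h2
        rw [bridge] at h1
        rw [bridge (R x⁻¹) (R x), ← bridge (R x) (R x⁻¹)] at h2
        rw [← bridge] at h1
        exact h1.trans h2
      · have hne : ((i, j) : Fin n × Fin n) ≠ (i, l) := by
          simp [Prod.ext_iff, hjl]
        rw [if_neg hne, smul_zero]
        have h1 := S1 (i, j, i0) (i0, l, i)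
        simp only [if_pos rfl, if_true] at h1
        have h2 := S2 (j, i0, i0) (i0, i0, l)
        simp only [if_pos rfl, if_true, if_neg hjl] at h2
        rw [bridge (R x⁻¹) (R x)] at h2
        rw [h1, ← h2]
    · have hne : ((i, j) : Fin n × Fin n) ≠ (k, l) := by
        simp [Prod.ext_iff, hik]
      rw [if_neg hne, smul_zero]
      have h1 := S1 (i, j, i0) (i0, l, k)
      simp only [if_pos rfl, if_true, if_neg hik] at h1
      exact h1
end
end

section
/- Let V be finite-dimensional, R(x) ∈ End(V ⊗ V) invertible satisfying the Yang-Baxter equation, unitarity R(x) R_{21}(1/x) ∝ Id, and regularity R(1) ∝ P. Let D ∈ GL(V) with [R(x), D ⊗ D] = 0. Fix z = (z₁,...,z_N) ∈ (ℂ^×)^N. Define the inhomogeneous transfer matrix T(x; z) := Tr₀ (D₀ R_{0N}(x/z_N) ⋯ R_{01}(x/z₁)) ∈ End(V^{⊗N}) and the scattering matrix A_i(z) := R_{i,i-1}(z_i/z_{i-1}) ⋯ R_{i1}(z_i/z₁) · D_i · R_{Ni}(z_N/z_i)^{-1} ⋯ R_{i+1,i}(z_{i+1}/z_i)^{-1}.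 Then T(z_i; z) is proportional to A_i(z) for each i = 1, ..., N (for generic z). -/
set_option linter.unusedSectionVars false
set_option linter.unusedVariables false
set_option maxHeartbeats 1000000


open Matrix Kronecker

noncomputable section

abbrev StM (n N : ℕ) := Matrix (Fin N → Fin n) (Fin N → Fin n) ℂ
abbrev BigM (n N : ℕ) := Matrix (Fin n × (Fin N → Fin n)) (Fin n × (Fin N → Fin n)) ℂ

/-- `K` acting in the auxiliary factor `0`. -/
def aux0 {n N : ℕ} (K : MatV n) : BigM n N :=
  Matrix.of fun p q => if p.2 = q.2 then K p.1 q.1 else 0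

/-- A two-site operator acting in the auxiliary factor `0` and site `j`. -/
def aux0J {n N : ℕ} (j : Fin N) (R : Sq n) : BigM n N :=
  Matrix.of fun p q =>
    if ∀ l, l ≠ j → p.2 l = q.2 l then R (p.1, p.2 j) (q.1, q.2 j) else 0

/-- `K` acting at site `j` of the state space `V^{⊗N}`. -/
def siteK {n N : ℕ} (j : Fin N) (K : MatV n) : StM n N :=
  Matrix.of fun p q => if ∀ l, l ≠ j → p l = q l then K (p j) (q j) else 0

/-- A two-site operator acting at sites `j` and `k` of `V^{⊗N}`. -/
def siteJK {n N : ℕ} (j k : Fin N) (R : Sq n) : StM n N :=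
  Matrix.of fun p q =>
    if ∀ l, l ≠ j → l ≠ k → p l = q l then R (p j, p k) (q j, q k) else 0

/-- Partial trace over the auxiliary factor. -/
def ptrA {n N : ℕ} (X : BigM n N) : StM n N :=
  Matrix.of fun p q => ∑ a : Fin n, X (a, p) (a, q)

/-- Descending ordered product `f(k-1) * ⋯ * f(0)`. -/
def pdesc {M : Type*} [Monoid M] {k : ℕ} (f : Fin k → M) : M := ((List.ofFn f).reverse).prod

/-- Ascending ordered product `f(0) * ⋯ * f(k-1)`. -/
def pasc {M : Type*} [Monoid M] {k : ℕ} (f : Fin k → M) : M := (List.ofFn f).prod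

/-- Inhomogeneous transfer matrix `T(x;z) = Tr₀ (D₀ R₀N(x/z_N) ⋯ R₀₁(x/z₁))`. -/
def Tper {n N : ℕ} (R : ℂ → Sq n) (D : MatV n) (z : Fin N → ℂ) (x : ℂ) : StM n N :=
  ptrA (aux0 D * pdesc fun i => aux0J i (R (x / z i)))

/-- qKZ transport matrix at `p = 1` (scattering matrix)
`A_i(z) = R_{i,i-1}(z_i/z_{i-1}) ⋯ R_{i1}(z_i/z₁) D_i R_{Ni}(z_N/z_i)⁻¹ ⋯ R_{i+1,i}(z_{i+1}/z_i)⁻¹`. -/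
def Aper {n N : ℕ} (R : ℂ → Sq n) (D : MatV n) (z : Fin N → ℂ) (i : Fin N) : StM n N :=
  pdesc (fun j : Fin i.1 =>
      siteJK i ⟨j.1, j.isLt.trans i.isLt⟩ (R (z i / z ⟨j.1, j.isLt.trans i.isLt⟩)))
  * siteK i D
  * pdesc (fun k : Fin (N - (i.1 + 1)) =>
      (siteJK ⟨i.1 + 1 + k.1, by have := k.isLt; omega⟩ i
        (R (z ⟨i.1 + 1 + k.1, by have := k.isLt; omega⟩ / z i)))⁻¹)

section Helpers
variable {n : ℕ} {ι : Type*} [Fintype ι] [DecidableEq ι]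

lemma sum_upd1 (s : ι) (p : ι → Fin n) (g : (ι → Fin n) → ℂ)
    (h : ∀ r, g r ≠ 0 → ∀ l, l ≠ s → p l = r l) :
    ∑ r, g r = ∑ v, g (Function.update p s v) := by
  have key : ∀ r : ι → Fin n, g r = ∑ v, if r = Function.update p s v then g r else 0 := by
    intro r
    by_cases hc : ∀ l, l ≠ s → p l = r l
    · rw [Finset.sum_eq_single (r s)]
      · rw [if_pos]
        funext l
        by_cases hl : l = s
        · subst hl; simp
        · rw [Function.update_of_ne hl]; exact (hc l hl).symm
      · intro v _ hv
        rw [if_neg]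
        intro he
        exact hv (by rw [he]; simp)
      · simp
    · by_cases hg : g r = 0
      · simp [hg]
      · exact absurd (h r hg) hc
  calc ∑ r, g r = ∑ r, ∑ v, if r = Function.update p s v then g r else 0 :=
        Finset.sum_congr rfl (fun r _ => key r)
    _ = ∑ v, ∑ r, if r = Function.update p s v then g r else 0 := Finset.sum_comm
    _ = ∑ v, g (Function.update p s v) := by
        refine Finset.sum_congr rfl (fun v _ => ?_)
        rw [Finset.sum_ite_eq' Finset.univ (Function.update p s v) g]
        simp

lemma sum_upd2 (s t : ι) (hst : s ≠ t) (p : ι → Fin n) (g : (ι → Fin n) → ℂ)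
    (h : ∀ r, g r ≠ 0 → ∀ l, l ≠ s → l ≠ t → p l = r l) :
    ∑ r, g r = ∑ v, ∑ w, g (Function.update (Function.update p s v) t w) := by
  have key : ∀ r : ι → Fin n, g r = ∑ vw : Fin n × Fin n,
      if r = Function.update (Function.update p s vw.1) t vw.2 then g r else 0 := by
    intro r
    by_cases hc : ∀ l, l ≠ s → l ≠ t → p l = r l
    · rw [Finset.sum_eq_single ((r s, r t) : Fin n × Fin n)]
      · rw [if_pos]
        funext l
        by_cases hlt : l = t
        · subst hlt; simp
        · rw [Function.update_of_ne hlt]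
          by_cases hls : l = s
          · subst hls; simp
          · rw [Function.update_of_ne hls]; exact (hc l hls hlt).symm
      · intro vw _ hvw
        rw [if_neg]
        intro he
        apply hvw
        have hs : r s = vw.1 := by rw [he]; rw [Function.update_of_ne hst]; simp
        have ht : r t = vw.2 := by rw [he]; simp
        rw [hs, ht]
      · simp
    · by_cases hg : g r = 0
      · simp [hg]
      · exact absurd (h r hg) hc
  calc ∑ r, g r = ∑ r, ∑ vw : Fin n × Fin n,
        if r = Function.update (Function.update p s vw.1) t vw.2 then g r else 0 :=
        Finset.sum_congr rfl (fun r _ => key r)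
    _ = ∑ vw : Fin n × Fin n, ∑ r,
        if r = Function.update (Function.update p s vw.1) t vw.2 then g r else 0 :=
        Finset.sum_comm
    _ = ∑ vw : Fin n × Fin n, g (Function.update (Function.update p s vw.1) t vw.2) := by
        refine Finset.sum_congr rfl (fun vw _ => ?_)
        rw [Finset.sum_ite_eq' Finset.univ _ g]
        simp
    _ = _ := by rw [Fintype.sum_prod_type]

end Helpers

section Lop
variable {n : ℕ} {ι : Type*} [Fintype ι] [DecidableEq ι]

def lop2 (s t : ι) (R : Sq n) : Matrix (ι → Fin n) (ι → Fin n) ℂ :=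
  Matrix.of fun p q => if ∀ l, l ≠ s → l ≠ t → p l = q l then R (p s, p t) (q s, q t) else 0

def lop1 (s : ι) (K : MatV n) : Matrix (ι → Fin n) (ι → Fin n) ℂ :=
  Matrix.of fun p q => if ∀ l, l ≠ s → p l = q l then K (p s) (q s) else 0

lemma lop2_ne_zero {s t : ι} {R : Sq n} {p q : ι → Fin n} (h : lop2 s t R p q ≠ 0) :
    ∀ l, l ≠ s → l ≠ t → p l = q l := by
  by_contra hc
  exact h (if_neg hc)

lemma lop1_ne_zero {s : ι} {K : MatV n} {p q : ι → Fin n} (h : lop1 s K p q ≠ 0) :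
    ∀ l, l ≠ s → p l = q l := by
  by_contra hc
  exact h (if_neg hc)

lemma lop2_mul_lop2 (s t : ι) (hst : s ≠ t) (R R' : Sq n) :
    lop2 s t R * lop2 s t R' = lop2 s t (R * R') := by
  ext p q
  rw [Matrix.mul_apply]
  rw [sum_upd2 s t hst p (fun r => lop2 s t R p r * lop2 s t R' r q)
    (fun r hr => lop2_ne_zero (left_ne_zero_of_mul hr))]
  simp only [lop2, Matrix.of_apply]
  have h1 : ∀ v w, (∀ l, l ≠ s → l ≠ t →
      p l = Function.update (Function.update p s v) t w l) := by
    intro v w l h1 h2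
    rw [Function.update_of_ne h2, Function.update_of_ne h1]
  have h2 : ∀ v w : Fin n, (∀ l, l ≠ s → l ≠ t →
      Function.update (Function.update p s v) t w l = q l) ↔ (∀ l, l ≠ s → l ≠ t → p l = q l) := by
    intro v w
    constructor
    · intro h l hs ht
      have := h l hs ht
      rwa [Function.update_of_ne ht, Function.update_of_ne hs] at this
    · intro h l hs ht
      rw [Function.update_of_ne ht, Function.update_of_ne hs]
      exact h l hs ht
  by_cases hc : ∀ l, l ≠ s → l ≠ t → p l = q l
  · rw [if_pos hc]
    rw [Matrix.mul_apply, Fintype.sum_prod_type]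
    refine Finset.sum_congr rfl (fun v _ => Finset.sum_congr rfl (fun w _ => ?_))
    rw [if_pos (h1 v w), if_pos ((h2 v w).mpr hc)]
    have es : Function.update (Function.update p s v) t w s = v := by
      rw [Function.update_of_ne hst, Function.update_self]
    have et : Function.update (Function.update p s v) t w t = w := Function.update_self _ _ _
    rw [es, et]
  · rw [if_neg hc]
    refine Finset.sum_eq_zero (fun v _ => Finset.sum_eq_zero (fun w _ => ?_))
    rw [if_neg (fun h => hc ((h2 v w).mp h)), mul_zero]

lemma lop2_one (s t : ι) (hst : s ≠ t) : lop2 s t (1 : Sq n) = 1 := by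
  ext p q
  by_cases h : p = q
  · subst h
    simp [lop2, Matrix.one_apply]
  · rw [Matrix.one_apply_ne h]
    simp only [lop2, Matrix.of_apply]
    split_ifs with hc
    · rw [Matrix.one_apply_ne]
      intro he
      apply h
      funext l
      by_cases hs : l = s
      · subst hs; exact (Prod.ext_iff.mp he).1
      · by_cases ht : l = t
        · subst ht; exact (Prod.ext_iff.mp he).2
        · exact hc l hs ht
    · rfl

lemma lop2_smul (s t : ι) (c : ℂ) (R : Sq n) : lop2 s t (c • R) = c • lop2 s t R := by
  ext p q
  simp only [lop2, Matrix.of_apply, Matrix.smul_apply]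
  split_ifs <;> simp

lemma lop2_swapM (s t : ι) (Q : Sq n) : lop2 s t (swapM Q) = lop2 t s Q := by
  ext p q
  simp only [lop2, swapM, Matrix.of_apply]
  exact if_congr ⟨fun h l h1 h2 => h l h2 h1, fun h l h1 h2 => h l h2 h1⟩ rfl rfl

end Lop
section Perm
variable {n : ℕ} {ι : Type*} [Fintype ι] [DecidableEq ι]

lemma lopP_apply (s t : ι) (p q : ι → Fin n) :
    lop2 s t (flipM n) p q = if p ∘ (Equiv.swap s t) = q then 1 else 0 := by
  have hiff : (p ∘ (Equiv.swap s t) = q) ↔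
      ((∀ l, l ≠ s → l ≠ t → p l = q l) ∧ (p s = q t ∧ p t = q s)) := by
    constructor
    · intro h
      have h' := congrFun h
      refine ⟨fun l h1 h2 => ?_, ?_, ?_⟩
      · simpa [Equiv.swap_apply_of_ne_of_ne h1 h2] using h' l
      · simpa [Equiv.swap_apply_right] using h' t
      · simpa [Equiv.swap_apply_left] using h' s
    · rintro ⟨h1, h2, h3⟩
      funext l
      simp only [Function.comp_apply]
      by_cases hls : l = s
      · subst hls; simpa [Equiv.swap_apply_left] using h3
      · by_cases hlt : l = t
        · subst hlt; simpa [Equiv.swap_apply_right] using h2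
        · simpa [Equiv.swap_apply_of_ne_of_ne hls hlt] using h1 l hls hlt
  simp only [lop2, flipM, Matrix.of_apply]
  by_cases hc : ∀ l, l ≠ s → l ≠ t → p l = q l
  · by_cases hd : p s = q t ∧ p t = q s
    · rw [if_pos hc, if_pos hd, if_pos (hiff.mpr ⟨hc, hd⟩)]
    · rw [if_pos hc, if_neg hd, if_neg (fun h => hd (hiff.mp h).2)]
  · rw [if_neg hc, if_neg (fun h => hc (hiff.mp h).1)]

lemma lopP_mul (s t : ι) (X : Matrix (ι → Fin n) (ι → Fin n) ℂ) :
    lop2 s t (flipM n) * X = Matrix.of fun p q => X (p ∘ Equiv.swap s t) q := by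
  ext p q
  rw [Matrix.mul_apply]
  simp only [lopP_apply, Matrix.of_apply, ite_mul, one_mul, zero_mul]
  rw [Finset.sum_ite_eq Finset.univ (p ∘ Equiv.swap s t) (fun r => X r q)]
  simp

lemma mul_lopP (s t : ι) (X : Matrix (ι → Fin n) (ι → Fin n) ℂ) :
    X * lop2 s t (flipM n) = Matrix.of fun p q => X p (q ∘ Equiv.swap s t) := by
  ext p q
  rw [Matrix.mul_apply]
  simp only [lopP_apply, Matrix.of_apply, mul_ite, mul_one, mul_zero]
  have : ∀ r : ι → Fin n, (r ∘ Equiv.swap s t = q) ↔ (r = q ∘ Equiv.swap s t) := by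
    intro r
    constructor
    · intro h; funext l
      have := congrFun h (Equiv.swap s t l)
      simpa [Equiv.swap_apply_self] using this
    · intro h; funext l
      rw [h]
      simp [Equiv.swap_apply_self]
  simp only [this]
  rw [Finset.sum_ite_eq' Finset.univ (q ∘ Equiv.swap s t) (fun r => X p r)]
  simp

lemma comp_swap_swap (s t : ι) (p : ι → Fin n) :
    (p ∘ Equiv.swap s t) ∘ Equiv.swap s t = p := by
  funext l; simp [Equiv.swap_apply_self]

lemma lopP_invol (s t : ι) :
    lop2 s t (flipM n) * lop2 s t (flipM n) = (1 : Matrix (ι → Fin n) (ι → Fin n) ℂ) := by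
  rw [lopP_mul]
  ext p q
  rw [Matrix.of_apply, lopP_apply, comp_swap_swap, Matrix.one_apply]

lemma lopP_push2 (s t u v : ι) (R : Sq n) :
    lop2 s t (flipM n) * lop2 u v R
      = lop2 (Equiv.swap s t u) (Equiv.swap s t v) R * lop2 s t (flipM n) := by
  rw [lopP_mul, mul_lopP]
  ext p q
  simp only [Matrix.of_apply, lop2, Function.comp_apply]
  refine if_congr ?_ ?_ rfl
  · constructor
    · intro h l h1 h2
      have := h (Equiv.swap s t l)
        (fun he => h1 (by rw [← he]; simp [Equiv.swap_apply_self]))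
        (fun he => h2 (by rw [← he]; simp [Equiv.swap_apply_self]))
      simpa [Equiv.swap_apply_self] using this
    · intro h l h1 h2
      have := h (Equiv.swap s t l)
        (fun he => h1 ((Equiv.swap s t).injective he))
        (fun he => h2 ((Equiv.swap s t).injective he))
      simpa [Equiv.swap_apply_self] using this
  · rw [Equiv.swap_apply_self, Equiv.swap_apply_self]

lemma lopP_push1 (s t u : ι) (K : MatV n) :
    lop2 s t (flipM n) * lop1 u K
      = lop1 (Equiv.swap s t u) K * lop2 s t (flipM n) := by
  rw [lopP_mul, mul_lopP]
  ext p q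
  simp only [Matrix.of_apply, lop1, Function.comp_apply]
  refine if_congr ?_ ?_ rfl
  · constructor
    · intro h l h1
      have := h (Equiv.swap s t l)
        (fun he => h1 (by rw [← he]; simp [Equiv.swap_apply_self]))
      simpa [Equiv.swap_apply_self] using this
    · intro h l h1
      have := h (Equiv.swap s t l)
        (fun he => h1 ((Equiv.swap s t).injective he))
      simpa [Equiv.swap_apply_self] using this
  · rw [Equiv.swap_apply_self]

end Perm
section Disjoint
variable {n : ℕ} {ι : Type*} [Fintype ι] [DecidableEq ι]

lemma lop2_mul_lop2_disjoint (s t u v : ι) (hst : s ≠ t)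
    (hsu : s ≠ u) (hsv : s ≠ v) (htu : t ≠ u) (htv : t ≠ v) (R Q : Sq n) :
    lop2 s t R * lop2 u v Q = Matrix.of fun p q =>
      if ∀ l, l ≠ s → l ≠ t → l ≠ u → l ≠ v → p l = q l
      then R (p s, p t) (q s, q t) * Q (p u, p v) (q u, q v) else 0 := by
  ext p q
  rw [Matrix.mul_apply]
  rw [sum_upd2 s t hst p (fun r => lop2 s t R p r * lop2 u v Q r q)
    (fun r hr => lop2_ne_zero (left_ne_zero_of_mul hr))]
  simp only [lop2, Matrix.of_apply]
  -- evaluate the first factor's condition (always true) and entries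
  have h1 : ∀ a b, (∀ l, l ≠ s → l ≠ t →
      p l = Function.update (Function.update p s a) t b l) := by
    intro a b l hs ht
    rw [Function.update_of_ne ht, Function.update_of_ne hs]
  have es : ∀ a b : Fin n, Function.update (Function.update p s a) t b s = a := by
    intro a b; rw [Function.update_of_ne hst, Function.update_self]
  have et : ∀ a b : Fin n, Function.update (Function.update p s a) t b t = b := by
    intro a b; rw [Function.update_self]
  have eu : ∀ a b : Fin n, Function.update (Function.update p s a) t b u = p u := by
    intro a b; rw [Function.update_of_ne (Ne.symm htu), Function.update_of_ne (Ne.symm hsu)]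
  have ev : ∀ a b : Fin n, Function.update (Function.update p s a) t b v = p v := by
    intro a b; rw [Function.update_of_ne (Ne.symm htv), Function.update_of_ne (Ne.symm hsv)]
  have h2 : ∀ a b : Fin n, (∀ l, l ≠ u → l ≠ v →
      Function.update (Function.update p s a) t b l = q l)
      ↔ (a = q s ∧ b = q t ∧ ∀ l, l ≠ s → l ≠ t → l ≠ u → l ≠ v → p l = q l) := by
    intro a b
    constructor
    · intro h
      refine ⟨?_, ?_, fun l hs ht hu hv => ?_⟩
      · have := h s hsu hsv; rwa [es] at this
      · have := h t htu htv; rwa [et] at this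
      · have := h l hu hv; rwa [Function.update_of_ne ht, Function.update_of_ne hs] at this
    · rintro ⟨ha, hb, h⟩ l hu hv
      by_cases hls : l = s
      · subst hls; rw [es]; exact ha
      · by_cases hlt : l = t
        · subst hlt; rw [et]; exact hb
        · rw [Function.update_of_ne hlt, Function.update_of_ne hls]; exact h l hls hlt hu hv
  by_cases hc : ∀ l, l ≠ s → l ≠ t → l ≠ u → l ≠ v → p l = q l
  · rw [if_pos hc]
    have : ∀ a b : Fin n,
        (if ∀ l, l ≠ s → l ≠ t → p l = Function.update (Function.update p s a) t b l
          then R (p s, p t) (Function.update (Function.update p s a) t b s,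
            Function.update (Function.update p s a) t b t) else 0) *
        (if ∀ l, l ≠ u → l ≠ v → Function.update (Function.update p s a) t b l = q l
          then Q (Function.update (Function.update p s a) t b u,
            Function.update (Function.update p s a) t b v) (q u, q v) else 0)
        = (if a = q s then if b = q t then R (p s, p t) (a, b) * Q (p u, p v) (q u, q v)
            else 0 else 0) := by
      intro a b
      rw [if_pos (h1 a b), es, et, eu, ev]
      by_cases ha : a = q s
      · by_cases hb : b = q t
        · rw [if_pos ((h2 a b).mpr ⟨ha, hb, hc⟩), if_pos ha, if_pos hb]
        · rw [if_neg (fun h => hb ((h2 a b).mp h).2.1), if_pos ha, if_neg hb, mul_zero]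
      · rw [if_neg (fun h => ha ((h2 a b).mp h).1), if_neg ha, mul_zero]
    simp only [this]
    simp
  · rw [if_neg hc]
    refine Finset.sum_eq_zero (fun a _ => Finset.sum_eq_zero (fun b _ => ?_))
    rw [if_neg (fun h => hc ((h2 a b).mp h).2.2), mul_zero]

lemma lop2_comm_lop2 (s t u v : ι) (hst : s ≠ t) (huv : u ≠ v)
    (hsu : s ≠ u) (hsv : s ≠ v) (htu : t ≠ u) (htv : t ≠ v) (R Q : Sq n) :
    Commute (lop2 s t R) (lop2 u v Q) := by
  unfold Commute SemiconjBy
  rw [lop2_mul_lop2_disjoint s t u v hst hsu hsv htu htv R Q,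
    lop2_mul_lop2_disjoint u v s t huv (Ne.symm hsu) (Ne.symm htu) (Ne.symm hsv) (Ne.symm htv) Q R]
  ext p q
  simp only [Matrix.of_apply]
  refine if_congr ⟨fun h l h1 h2 h3 h4 => h l h3 h4 h1 h2, fun h l h1 h2 h3 h4 => h l h3 h4 h1 h2⟩
    (mul_comm _ _) rfl

lemma lop1_mul_lop2_disjoint (s u v : ι) (huv : u ≠ v) (hsu : s ≠ u) (hsv : s ≠ v)
    (K : MatV n) (Q : Sq n) :
    lop1 s K * lop2 u v Q = Matrix.of fun p q =>
      if ∀ l, l ≠ s → l ≠ u → l ≠ v → p l = q l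
      then K (p s) (q s) * Q (p u, p v) (q u, q v) else 0 := by
  ext p q
  rw [Matrix.mul_apply]
  rw [sum_upd1 s p (fun r => lop1 s K p r * lop2 u v Q r q)
    (fun r hr => lop1_ne_zero (left_ne_zero_of_mul hr))]
  simp only [lop1, lop2, Matrix.of_apply]
  have h1 : ∀ a, (∀ l, l ≠ s → p l = Function.update p s a l) := by
    intro a l hs; rw [Function.update_of_ne hs]
  have es : ∀ a : Fin n, Function.update p s a s = a := fun a => Function.update_self _ _ _
  have eu : ∀ a : Fin n, Function.update p s a u = p u :=
    fun a => Function.update_of_ne (Ne.symm hsu) _ _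
  have ev : ∀ a : Fin n, Function.update p s a v = p v :=
    fun a => Function.update_of_ne (Ne.symm hsv) _ _
  have h2 : ∀ a : Fin n, (∀ l, l ≠ u → l ≠ v → Function.update p s a l = q l)
      ↔ (a = q s ∧ ∀ l, l ≠ s → l ≠ u → l ≠ v → p l = q l) := by
    intro a
    constructor
    · intro h
      refine ⟨?_, fun l hs hu hv => ?_⟩
      · have := h s hsu hsv; rwa [es] at this
      · have := h l hu hv; rwa [Function.update_of_ne hs] at this
    · rintro ⟨ha, h⟩ l hu hv
      by_cases hls : l = s
      · subst hls; rw [es]; exact ha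
      · rw [Function.update_of_ne hls]; exact h l hls hu hv
  by_cases hc : ∀ l, l ≠ s → l ≠ u → l ≠ v → p l = q l
  · rw [if_pos hc]
    have : ∀ a : Fin n,
        (if ∀ l, l ≠ s → p l = Function.update p s a l
          then K (p s) (Function.update p s a s) else 0) *
        (if ∀ l, l ≠ u → l ≠ v → Function.update p s a l = q l
          then Q (Function.update p s a u, Function.update p s a v) (q u, q v) else 0)
        = (if a = q s then K (p s) a * Q (p u, p v) (q u, q v) else 0) := by
      intro a
      rw [if_pos (h1 a), es, eu, ev]
      by_cases ha : a = q s
      · rw [if_pos ((h2 a).mpr ⟨ha, hc⟩), if_pos ha]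
      · rw [if_neg (fun h => ha ((h2 a).mp h).1), if_neg ha, mul_zero]
    simp only [this]
    rw [Finset.sum_ite_eq' Finset.univ (q s)]
    simp
  · rw [if_neg hc]
    refine Finset.sum_eq_zero (fun a _ => ?_)
    rw [if_neg (fun h => hc ((h2 a).mp h).2), mul_zero]

lemma lop2_mul_lop1_disjoint (s u v : ι) (huv : u ≠ v) (hsu : s ≠ u) (hsv : s ≠ v)
    (K : MatV n) (Q : Sq n) :
    lop2 u v Q * lop1 s K = Matrix.of fun p q =>
      if ∀ l, l ≠ u → l ≠ v → l ≠ s → p l = q l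
      then Q (p u, p v) (q u, q v) * K (p s) (q s) else 0 := by
  ext p q
  rw [Matrix.mul_apply]
  rw [sum_upd2 u v huv p (fun r => lop2 u v Q p r * lop1 s K r q)
    (fun r hr => lop2_ne_zero (left_ne_zero_of_mul hr))]
  simp only [lop1, lop2, Matrix.of_apply]
  have h1 : ∀ a b, (∀ l, l ≠ u → l ≠ v →
      p l = Function.update (Function.update p u a) v b l) := by
    intro a b l hu hv
    rw [Function.update_of_ne hv, Function.update_of_ne hu]
  have eu : ∀ a b : Fin n, Function.update (Function.update p u a) v b u = a := by
    intro a b; rw [Function.update_of_ne huv, Function.update_self]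
  have ev : ∀ a b : Fin n, Function.update (Function.update p u a) v b v = b := by
    intro a b; rw [Function.update_self]
  have es : ∀ a b : Fin n, Function.update (Function.update p u a) v b s = p s := by
    intro a b; rw [Function.update_of_ne hsv, Function.update_of_ne hsu]
  have h2 : ∀ a b : Fin n, (∀ l, l ≠ s → Function.update (Function.update p u a) v b l = q l)
      ↔ (a = q u ∧ b = q v ∧ ∀ l, l ≠ u → l ≠ v → l ≠ s → p l = q l) := by
    intro a b
    constructor
    · intro h
      refine ⟨?_, ?_, fun l hu hv hs => ?_⟩
      · have := h u (Ne.symm hsu); rwa [eu] at this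
      · have := h v (Ne.symm hsv); rwa [ev] at this
      · have := h l hs; rwa [Function.update_of_ne hv, Function.update_of_ne hu] at this
    · rintro ⟨ha, hb, h⟩ l hs
      by_cases hlu : l = u
      · subst hlu; rw [eu]; exact ha
      · by_cases hlv : l = v
        · subst hlv; rw [ev]; exact hb
        · rw [Function.update_of_ne hlv, Function.update_of_ne hlu]; exact h l hlu hlv hs
  by_cases hc : ∀ l, l ≠ u → l ≠ v → l ≠ s → p l = q l
  · rw [if_pos hc]
    have : ∀ a b : Fin n,
        (if ∀ l, l ≠ u → l ≠ v → p l = Function.update (Function.update p u a) v b l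
          then Q (p u, p v) (Function.update (Function.update p u a) v b u,
            Function.update (Function.update p u a) v b v) else 0) *
        (if ∀ l, l ≠ s → Function.update (Function.update p u a) v b l = q l
          then K (Function.update (Function.update p u a) v b s) (q s) else 0)
        = (if a = q u then if b = q v then Q (p u, p v) (a, b) * K (p s) (q s)
            else 0 else 0) := by
      intro a b
      rw [if_pos (h1 a b), eu, ev, es]
      by_cases ha : a = q u
      · by_cases hb : b = q v
        · rw [if_pos ((h2 a b).mpr ⟨ha, hb, hc⟩), if_pos ha, if_pos hb]
        · rw [if_neg (fun h => hb ((h2 a b).mp h).2.1), if_pos ha, if_neg hb, mul_zero]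
      · rw [if_neg (fun h => ha ((h2 a b).mp h).1), if_neg ha, mul_zero]
    simp only [this]
    simp
  · rw [if_neg hc]
    refine Finset.sum_eq_zero (fun a _ => Finset.sum_eq_zero (fun b _ => ?_))
    rw [if_neg (fun h => hc ((h2 a b).mp h).2.2), mul_zero]

lemma lop1_comm_lop2 (s u v : ι) (huv : u ≠ v) (hsu : s ≠ u) (hsv : s ≠ v)
    (K : MatV n) (Q : Sq n) :
    Commute (lop1 s K) (lop2 u v Q) := by
  unfold Commute SemiconjBy
  rw [lop1_mul_lop2_disjoint s u v huv hsu hsv K Q,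
    lop2_mul_lop1_disjoint s u v huv hsu hsv K Q]
  ext p q
  simp only [Matrix.of_apply]
  refine if_congr ⟨fun h l h1 h2 h3 => h l h3 h1 h2, fun h l h1 h2 h3 => h l h2 h3 h1⟩
    (mul_comm _ _) rfl

end Disjoint
section Pdesc
variable {M : Type*} [Monoid M]

lemma pdesc_zero (f : Fin 0 → M) : pdesc f = 1 := by simp [pdesc]

lemma pdesc_succ {k : ℕ} (f : Fin (k+1) → M) :
    pdesc f = f (Fin.last k) * pdesc (fun m : Fin k => f m.castSucc) := by
  unfold pdesc
  rw [List.ofFn_succ' f, List.concat_eq_append, List.reverse_append]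
  simp

lemma ofFn_split {N : ℕ} (f : Fin N → M) (i : Fin N) :
    List.ofFn f = List.ofFn (fun j : Fin i.1 => f ⟨j.1, j.isLt.trans i.isLt⟩)
      ++ f i :: List.ofFn (fun k : Fin (N - (i.1+1)) => f ⟨i.1+1+k.1, by omega⟩) := by
  have hi := i.isLt
  apply List.ext_getElem
  · simp; omega
  · intro k h1 h2
    rw [List.getElem_ofFn, List.getElem_append]
    by_cases hk : k < i.1
    · rw [dif_pos (by simpa using hk), List.getElem_ofFn]
    · rw [dif_neg (by simpa using hk), List.getElem_cons]
      by_cases he : k = i.1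
      · rw [dif_pos (by simp [he])]
        exact congrArg f (Fin.ext he)
      · rw [dif_neg (by simp; omega), List.getElem_ofFn]
        exact congrArg f (Fin.ext (by simp; omega))

lemma pdesc_split {N : ℕ} (f : Fin N → M) (i : Fin N) :
    pdesc f = pdesc (fun k : Fin (N - (i.1+1)) => f ⟨i.1+1+k.1, by omega⟩)
      * f i * pdesc (fun j : Fin i.1 => f ⟨j.1, j.isLt.trans i.isLt⟩) := by
  unfold pdesc
  rw [ofFn_split f i]
  rw [List.reverse_append, List.reverse_cons, List.prod_append, List.prod_append]
  simp [mul_assoc]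

lemma map_pdesc {N' : Type*} [Monoid N'] {F : Type*} [FunLike F M N'] [MonoidHomClass F M N']
    (φ : F) {k : ℕ} (f : Fin k → M) : φ (pdesc f) = pdesc (fun m => φ (f m)) := by
  unfold pdesc
  rw [map_list_prod φ]
  congr 1
  rw [List.map_reverse, List.map_ofFn]
  rfl

lemma commute_pdesc (x : M) {k : ℕ} (f : Fin k → M) (h : ∀ m, Commute x (f m)) :
    Commute x (pdesc f) := by
  apply Commute.list_prod_right
  intro y hy
  rw [List.mem_reverse, List.mem_ofFn] at hy
  obtain ⟨m, rfl⟩ := hy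
  exact h m

lemma pdesc_commute {k k' : ℕ} (f : Fin k → M) (g : Fin k' → M)
    (h : ∀ a b, Commute (f a) (g b)) : Commute (pdesc f) (pdesc g) :=
  commute_pdesc (pdesc f) g (fun b => (commute_pdesc (g b) f (fun a => (h a b).symm)).symm)

end Pdesc

lemma pdesc_smul {m : Type*} [Fintype m] [DecidableEq m] {k : ℕ} (c : Fin k → ℂ)
    (F : Fin k → Matrix m m ℂ) :
    pdesc (fun a => c a • F a) = (∏ a, c a) • pdesc F := by
  induction k with
  | zero => simp [pdesc_zero]
  | succ k ih =>
    rw [pdesc_succ, pdesc_succ F, ih (fun a => c a.castSucc) (fun a => F a.castSucc)]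
    rw [smul_mul_assoc, mul_smul_comm, smul_smul, Fin.prod_univ_castSucc,
      mul_comm (∏ a : Fin k, c a.castSucc) (c (Fin.last k))]
section BigStuff
variable {n N : ℕ}

lemma siteJK_lop2 (j k : Fin N) (R : Sq n) : siteJK j k R = lop2 j k R := by
  ext p q
  simp only [siteJK, lop2, Matrix.of_apply]
  split_ifs <;> rfl

lemma siteK_lop1 (j : Fin N) (K : MatV n) : siteK j K = lop1 j K := by
  ext p q
  simp only [siteK, lop1, Matrix.of_apply]
  split_ifs <;> rfl

def bigOf (S : StM n N) : BigM n N :=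
  Matrix.of fun p q => if p.1 = q.1 then S p.2 q.2 else 0

lemma bigOf_one : bigOf (1 : StM n N) = 1 := by
  ext ⟨a, p⟩ ⟨b, q⟩
  by_cases hab : a = b
  · by_cases hpq : p = q
    · simp [bigOf, hab, hpq, Matrix.one_apply]
    · simp [bigOf, hab, hpq, Matrix.one_apply, Prod.ext_iff]
  · simp [bigOf, hab, Matrix.one_apply, Prod.ext_iff]

lemma bigOf_mul (S S' : StM n N) : bigOf (S * S') = bigOf S * bigOf S' := by
  ext ⟨a, p⟩ ⟨b, q⟩
  rw [Matrix.mul_apply, Fintype.sum_prod_type]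
  simp only [bigOf, Matrix.of_apply, ite_mul, zero_mul]
  have hc : ∀ r, (∑ c : Fin n, if a = c then S p r * (if c = b then S' r q else 0) else 0)
      = S p r * (if a = b then S' r q else 0) := by
    intro r
    rw [Finset.sum_ite_eq Finset.univ a]
    simp
  rw [Finset.sum_comm]
  simp only [hc]
  by_cases hab : a = b
  · simp [hab, Matrix.mul_apply]
  · simp [hab]

def bigOfHom : StM n N →* BigM n N where
  toFun := bigOf
  map_one' := bigOf_one
  map_mul' := bigOf_mul

def bigEquiv : (Option (Fin N) → Fin n) ≃ (Fin n × (Fin N → Fin n)) where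
  toFun f := (f none, fun m => f (some m))
  invFun x := fun o => o.elim x.1 x.2
  left_inv f := by funext o; cases o <;> rfl
  right_inv x := rfl

def toBig : Matrix (Option (Fin N) → Fin n) (Option (Fin N) → Fin n) ℂ ≃ₐ[ℂ] BigM n N :=
  Matrix.reindexAlgEquiv ℂ ℂ bigEquiv

lemma toBig_apply (X : Matrix (Option (Fin N) → Fin n) (Option (Fin N) → Fin n) ℂ)
    (p q : Fin n × (Fin N → Fin n)) :
    toBig X p q = X (bigEquiv.symm p) (bigEquiv.symm q) := rfl

lemma bigEquiv_symm_apply (x : Fin n × (Fin N → Fin n)) (o : Option (Fin N)) :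
    bigEquiv.symm x o = o.elim x.1 x.2 := rfl

lemma toBig_lop2_aux (j : Fin N) (R : Sq n) :
    toBig (lop2 none (some j) R) = aux0J j R := by
  ext ⟨a, p⟩ ⟨b, q⟩
  rw [toBig_apply]
  simp only [lop2, aux0J, Matrix.of_apply]
  refine if_congr ?_ rfl rfl
  rw [Option.forall]
  simp [bigEquiv_symm_apply]

lemma toBig_lop1_aux (K : MatV n) :
    toBig (lop1 none K) = aux0 (N := N) K := by
  ext ⟨a, p⟩ ⟨b, q⟩
  rw [toBig_apply]
  simp only [lop1, aux0, Matrix.of_apply]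
  refine if_congr ?_ rfl rfl
  rw [Option.forall]
  simp [bigEquiv_symm_apply, funext_iff]

lemma toBig_lop2_site (i j : Fin N) (R : Sq n) :
    toBig (lop2 (some i) (some j) R) = bigOf (siteJK i j R) := by
  ext ⟨a, p⟩ ⟨b, q⟩
  rw [toBig_apply]
  simp only [lop2, bigOf, siteJK, Matrix.of_apply]
  have hiff : (∀ l : Option (Fin N), l ≠ some i → l ≠ some j →
      bigEquiv.symm (a, p) l = bigEquiv.symm (b, q) l)
      ↔ (a = b ∧ ∀ l, l ≠ i → l ≠ j → p l = q l) := by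
    rw [Option.forall]
    simp [bigEquiv_symm_apply]
  by_cases hab : a = b
  · by_cases hsite : ∀ l, l ≠ i → l ≠ j → p l = q l
    · rw [if_pos (hiff.mpr ⟨hab, hsite⟩), if_pos hab, if_pos hsite]
      rfl
    · rw [if_neg (fun h => hsite (hiff.mp h).2), if_pos hab, if_neg hsite]
  · rw [if_neg (fun h => hab (hiff.mp h).1), if_neg hab]

lemma toBig_lop1_site (i : Fin N) (K : MatV n) :
    toBig (lop1 (some i) K) = bigOf (siteK i K) := by
  ext ⟨a, p⟩ ⟨b, q⟩
  rw [toBig_apply]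
  simp only [lop1, bigOf, siteK, Matrix.of_apply]
  have hiff : (∀ l : Option (Fin N), l ≠ some i →
      bigEquiv.symm (a, p) l = bigEquiv.symm (b, q) l)
      ↔ (a = b ∧ ∀ l, l ≠ i → p l = q l) := by
    rw [Option.forall]
    simp [bigEquiv_symm_apply]
  by_cases hab : a = b
  · by_cases hsite : ∀ l, l ≠ i → p l = q l
    · rw [if_pos (hiff.mpr ⟨hab, hsite⟩), if_pos hab, if_pos hsite]
      rfl
    · rw [if_neg (fun h => hsite (hiff.mp h).2), if_pos hab, if_neg hsite]
  · rw [if_neg (fun h => hab (hiff.mp h).1), if_neg hab]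

lemma ptrA_smul (c : ℂ) (X : BigM n N) : ptrA (c • X) = c • ptrA X := by
  ext p q
  simp [ptrA, Finset.mul_sum]

lemma ptrA_mul_bigOf (X : BigM n N) (S : StM n N) : ptrA (X * bigOf S) = ptrA X * S := by
  ext p q
  simp only [ptrA, Matrix.of_apply, Matrix.mul_apply, Fintype.sum_prod_type, bigOf,
    mul_ite, mul_zero]
  have hc : ∀ a r, (∑ b : Fin n, if b = a then X (a, p) (b, r) * S r q else 0)
      = X (a, p) (a, r) * S r q := by
    intro a r
    rw [Finset.sum_ite_eq' Finset.univ a]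
    simp
  calc ∑ a : Fin n, ∑ b : Fin n, ∑ r, (if b = a then X (a, p) (b, r) * S r q else 0)
      = ∑ a : Fin n, ∑ r, ∑ b : Fin n, (if b = a then X (a, p) (b, r) * S r q else 0) := by
        refine Finset.sum_congr rfl fun a _ => Finset.sum_comm
    _ = ∑ a : Fin n, ∑ r, X (a, p) (a, r) * S r q := by
        refine Finset.sum_congr rfl fun a _ => Finset.sum_congr rfl fun r _ => hc a r
    _ = ∑ r, (∑ a : Fin n, X (a, p) (a, r)) * S r q := by
        rw [Finset.sum_comm]
        exact Finset.sum_congr rfl fun r _ => (Finset.sum_mul _ _ _).symm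

lemma ptrA_bigOf_mul (S : StM n N) (X : BigM n N) : ptrA (bigOf S * X) = S * ptrA X := by
  ext p q
  simp only [ptrA, Matrix.of_apply, Matrix.mul_apply, Fintype.sum_prod_type, bigOf,
    ite_mul, zero_mul]
  have hc : ∀ a r, (∑ b : Fin n, if a = b then S p r * X (b, r) (a, q) else 0)
      = S p r * X (a, r) (a, q) := by
    intro a r
    rw [Finset.sum_ite_eq Finset.univ a]
    simp
  calc ∑ a : Fin n, ∑ b : Fin n, ∑ r, (if a = b then S p r * X (b, r) (a, q) else 0)
      = ∑ a : Fin n, ∑ r, ∑ b : Fin n, (if a = b then S p r * X (b, r) (a, q) else 0) := by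
        refine Finset.sum_congr rfl fun a _ => Finset.sum_comm
    _ = ∑ a : Fin n, ∑ r, S p r * X (a, r) (a, q) := by
        refine Finset.sum_congr rfl fun a _ => Finset.sum_congr rfl fun r _ => hc a r
    _ = ∑ r, S p r * ∑ a : Fin n, X (a, r) (a, q) := by
        rw [Finset.sum_comm]
        exact Finset.sum_congr rfl fun r _ => (Finset.mul_sum _ _ _).symm

lemma ptrA_flip (i : Fin N) : ptrA (aux0J i (flipM n)) = 1 := by
  ext p q
  simp only [ptrA, Matrix.of_apply, aux0J, flipM]
  have hc : ∀ a : Fin n,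
      (if ∀ l, l ≠ i → p l = q l then (if a = q i ∧ p i = a then (1:ℂ) else 0) else 0)
      = if a = q i then (if (∀ l, l ≠ i → p l = q l) ∧ p i = q i then (1:ℂ) else 0) else 0 := by
    intro a
    by_cases ha : a = q i
    · subst ha
      by_cases h1 : ∀ l, l ≠ i → p l = q l
      · by_cases h2 : p i = q i <;> simp [h1, h2]
      · simp [h1]
    · rw [if_neg ha]
      by_cases h1 : ∀ l, l ≠ i → p l = q l
      · rw [if_pos h1, if_neg (fun h => ha h.1)]
      · rw [if_neg h1]
  rw [Finset.sum_congr rfl fun a _ => hc a]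
  rw [Finset.sum_ite_eq' Finset.univ (q i)]
  simp only [Finset.mem_univ, if_true]
  rw [Matrix.one_apply]
  refine if_congr ?_ rfl rfl
  constructor
  · rintro ⟨h1, h2⟩
    funext l
    by_cases hl : l = i
    · subst hl; exact h2
    · exact h1 l hl
  · intro h; subst h; exact ⟨fun _ _ => rfl, rfl⟩

lemma aux0J_smul (i : Fin N) (c : ℂ) (R : Sq n) : aux0J i (c • R) = c • aux0J i R := by
  ext p q
  simp only [aux0J, Matrix.of_apply, Matrix.smul_apply]
  split_ifs <;> simp

end BigStuff
section Push
variable {n : ℕ} {ι : Type*} [Fintype ι] [DecidableEq ι]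

lemma flip_conj {M : Type*} [Monoid M] {P X Y : M} (hP : P * P = 1) (h : X * P = P * Y) :
    P * X = Y * P := by
  calc P * X = P * X * (P * P) := by rw [hP, mul_one]
    _ = P * (X * P) * P := by rw [← mul_assoc, mul_assoc P X P]
    _ = P * (P * Y) * P := by rw [h]
    _ = (P * P) * (Y * P) := by simp only [mul_assoc]
    _ = Y * P := by rw [hP, one_mul]

lemma push_right (s t : ι) {k : ℕ} (g : Fin k → ι)
    (hgs : ∀ m, g m ≠ s) (hgt : ∀ m, g m ≠ t) (Q : Fin k → Sq n) :
    pdesc (fun m => lop2 s (g m) (Q m)) * lop2 s t (flipM n)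
      = lop2 s t (flipM n) * pdesc (fun m => lop2 t (g m) (Q m)) := by
  induction k with
  | zero => rw [pdesc_zero, pdesc_zero, one_mul, mul_one]
  | succ k ih =>
    rw [pdesc_succ, pdesc_succ (fun m => lop2 t (g m) (Q m))]
    rw [mul_assoc,
      ih (fun m => g m.castSucc) (fun m => hgs m.castSucc) (fun m => hgt m.castSucc)
        (fun m => Q m.castSucc)]
    rw [← mul_assoc, ← mul_assoc]
    congr 1
    have h := lopP_push2 s t t (g (Fin.last k)) (Q (Fin.last k))
    rw [Equiv.swap_apply_right,
      Equiv.swap_apply_of_ne_of_ne (hgs (Fin.last k)) (hgt (Fin.last k))] at h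
    exact h.symm

lemma push_left (s t : ι) {k : ℕ} (g : Fin k → ι)
    (hgs : ∀ m, g m ≠ s) (hgt : ∀ m, g m ≠ t) (Q : Fin k → Sq n) :
    lop2 s t (flipM n) * pdesc (fun m => lop2 s (g m) (Q m))
      = pdesc (fun m => lop2 t (g m) (Q m)) * lop2 s t (flipM n) :=
  flip_conj (lopP_invol s t) (push_right s t g hgs hgt Q)

lemma push_lop1 (s t : ι) (K : MatV n) :
    lop1 s K * lop2 s t (flipM n) = lop2 s t (flipM n) * lop1 t K := by
  have h := lopP_push1 s t t K
  rw [Equiv.swap_apply_right] at h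
  exact h.symm

end Push

section Key
variable {n N : ℕ}

lemma key_lemma (i : Fin N) {ku kl : ℕ} (gu : Fin ku → Fin N) (gl : Fin kl → Fin N)
    (hgu : ∀ m, gu m ≠ i) (hgl : ∀ m, gl m ≠ i) (hgugl : ∀ a b, gu a ≠ gl b)
    (Qu : Fin ku → Sq n) (Ql : Fin kl → Sq n) (D : MatV n) :
    aux0 D * (pdesc (fun m => aux0J (gu m) (Qu m)) * aux0J i (flipM n)
      * pdesc (fun m => aux0J (gl m) (Ql m)))
    = bigOf (pdesc fun m => siteJK i (gl m) (Ql m)) * aux0J i (flipM n)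
      * bigOf (siteK i D) * bigOf (pdesc fun m => siteJK i (gu m) (Qu m)) := by
  classical
  have hsome : ∀ m : Fin N, (some m : Option (Fin N)) ≠ none := fun m => by simp
  have hU : pdesc (fun m => aux0J (gu m) (Qu m))
      = toBig (pdesc (fun m => lop2 none (some (gu m)) (Qu m))) := by
    rw [map_pdesc]
    simp only [toBig_lop2_aux]
  have hL : pdesc (fun m => aux0J (gl m) (Ql m))
      = toBig (pdesc (fun m => lop2 none (some (gl m)) (Ql m))) := by
    rw [map_pdesc]
    simp only [toBig_lop2_aux]
  have hUs : bigOf (pdesc fun m => siteJK i (gu m) (Qu m))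
      = toBig (pdesc (fun m => lop2 (some i) (some (gu m)) (Qu m))) := by
    rw [map_pdesc]
    simp only [toBig_lop2_site]
    rw [show bigOf (pdesc fun m => siteJK i (gu m) (Qu m))
        = bigOfHom (pdesc fun m => siteJK i (gu m) (Qu m)) from rfl, map_pdesc]
    rfl
  have hLs : bigOf (pdesc fun m => siteJK i (gl m) (Ql m))
      = toBig (pdesc (fun m => lop2 (some i) (some (gl m)) (Ql m))) := by
    rw [map_pdesc]
    simp only [toBig_lop2_site]
    rw [show bigOf (pdesc fun m => siteJK i (gl m) (Ql m))
        = bigOfHom (pdesc fun m => siteJK i (gl m) (Ql m)) from rfl, map_pdesc]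
    rfl
  rw [hU, hL, hUs, hLs, ← toBig_lop1_aux (n := n) (N := N) D, ← toBig_lop2_aux i (flipM n),
    ← toBig_lop1_site i D, ← _root_.map_mul, ← _root_.map_mul, ← _root_.map_mul, ← _root_.map_mul, ← _root_.map_mul, ← _root_.map_mul]
  congr 1
  -- pure lop-level statement
  have hA := push_right (none : Option (Fin N)) (some i) (fun m => some (gu m))
    (fun m => hsome _) (fun m => by simpa using hgu m) Qu
  have hB := push_left (none : Option (Fin N)) (some i) (fun m => some (gl m))
    (fun m => hsome _) (fun m => by simpa using hgl m) Ql
  have hC := push_lop1 (none : Option (Fin N)) (some i) D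
  have hcomm1 : Commute (lop1 (some i) D)
      (pdesc (fun m => lop2 none (some (gl m)) (Ql m))) := by
    refine commute_pdesc _ _ fun m => ?_
    exact lop1_comm_lop2 (some i) none (some (gl m)) (Ne.symm (hsome _)) (hsome _)
      (by simpa using (hgl m).symm) D (Ql m)
  have hcomm2 : Commute (pdesc (fun m => lop2 (some i) (some (gu m)) (Qu m)))
      (pdesc (fun m => lop2 none (some (gl m)) (Ql m))) := by
    refine pdesc_commute _ _ fun a b => ?_
    exact lop2_comm_lop2 (some i) (some (gu a)) none (some (gl b))
      (by simpa using (hgu a).symm) ((hsome _).symm) (hsome _)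
      (by simpa using (hgl b).symm) (hsome _) (by simpa using hgugl a b) (Qu a) (Ql b)
  set P : Matrix (Option (Fin N) → Fin n) (Option (Fin N) → Fin n) ℂ :=
    lop2 none (some i) (flipM n) with hPdef
  set U := pdesc (fun m => lop2 (none : Option (Fin N)) (some (gu m)) (Qu m)) with hUdef
  set Us := pdesc (fun m => lop2 (some i : Option (Fin N)) (some (gu m)) (Qu m)) with hUsdef
  set L := pdesc (fun m => lop2 (none : Option (Fin N)) (some (gl m)) (Ql m)) with hLdef
  set Ls := pdesc (fun m => lop2 (some i : Option (Fin N)) (some (gl m)) (Ql m)) with hLsdef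
  calc lop1 none D * (U * P * L)
      = lop1 none D * ((P * Us) * L) := by rw [hA]
    _ = (lop1 none D * P) * (Us * L) := by simp only [mul_assoc]
    _ = (P * lop1 (some i) D) * (Us * L) := by rw [hC]
    _ = (P * lop1 (some i) D) * (L * Us) := by rw [hcomm2.eq]
    _ = P * ((lop1 (some i) D * L) * Us) := by simp only [mul_assoc]
    _ = P * ((L * lop1 (some i) D) * Us) := by rw [hcomm1.eq]
    _ = (P * L) * (lop1 (some i) D * Us) := by simp only [mul_assoc]
    _ = (Ls * P) * (lop1 (some i) D * Us) := by rw [hB]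
    _ = Ls * P * lop1 (some i) D * Us := by simp only [mul_assoc]

end Key

/-- Gaudin's observation — interpolants of the inhomogeneous transfer matrix at the
inhomogeneities are proportional to the scattering (qKZ transport at `p = 1`) matrices. -/
theorem stmt7 (n N : ℕ) (R : ℂ → Sq n) (D : MatV n) (z : Fin N → ℂ)
    (hRinv : ∀ x : ℂ, IsUnit (R x))
    (hYBE : YBEprop R)
    (hunit : ∀ x : ℂ, x ≠ 0 → ∃ c : ℂ, c ≠ 0 ∧ R x * swapM (R x⁻¹) = c • (1 : Sq n))
    (hreg : ∃ c : ℂ, c ≠ 0 ∧ R 1 = c • flipM n)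
    (hD : IsUnit D)
    (hDD : ∀ x : ℂ, R x * (D ⊗ₖ D) = (D ⊗ₖ D) * R x)
    (hz : ∀ i, z i ≠ 0) :
    ∀ i : Fin N, ∃ c : ℂ, c ≠ 0 ∧ Tper R D z (z i) = c • Aper R D z i := by
  intro i
  obtain ⟨c₀, hc00, hreg1⟩ := hreg
  have hzz : z i / z i = 1 := div_self (hz i)
  have hbound : ∀ k : Fin (N - (i.1 + 1)), i.1 + 1 + k.1 < N :=
    fun k => by have := k.isLt; omega
  choose cu hcu0 hcuR using fun k : Fin (N - (i.1 + 1)) =>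
    hunit (z i / z ⟨i.1 + 1 + k.1, hbound k⟩)
      (div_ne_zero (hz i) (hz _))
  refine ⟨c₀ * ∏ k, cu k,
    mul_ne_zero hc00 (Finset.prod_ne_zero_iff.mpr fun k _ => hcu0 k), ?_⟩
  have hsplit := pdesc_split (fun m : Fin N => aux0J (n := n) m (R (z i / z m))) i
  show ptrA (aux0 D * pdesc fun m => aux0J m (R (z i / z m))) = _
  rw [hsplit, hzz, hreg1, aux0J_smul]
  rw [mul_smul_comm, smul_mul_assoc, mul_smul_comm, ptrA_smul]
  have hkey := key_lemma i
    (fun k : Fin (N - (i.1 + 1)) => (⟨i.1 + 1 + k.1, hbound k⟩ : Fin N))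
    (fun j : Fin i.1 => (⟨j.1, j.isLt.trans i.isLt⟩ : Fin N))
    (fun m => Fin.ne_of_val_ne (show i.1 + 1 + m.1 ≠ i.1 by omega))
    (fun m => Fin.ne_of_val_ne (show m.1 ≠ i.1 from Nat.ne_of_lt m.isLt))
    (fun a b => Fin.ne_of_val_ne (show i.1 + 1 + a.1 ≠ b.1 by have := b.isLt; omega))
    (fun k => R (z i / z ⟨i.1 + 1 + k.1, hbound k⟩))
    (fun j => R (z i / z ⟨j.1, j.isLt.trans i.isLt⟩)) D
  rw [hkey]
  rw [ptrA_mul_bigOf, ptrA_mul_bigOf, ptrA_bigOf_mul, ptrA_flip, mul_one]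
  have hfac : (fun k : Fin (N - (i.1 + 1)) =>
      siteJK i (⟨i.1 + 1 + k.1, hbound k⟩ : Fin N)
        (R (z i / z ⟨i.1 + 1 + k.1, hbound k⟩)))
      = fun k : Fin (N - (i.1 + 1)) => cu k •
        (siteJK (⟨i.1 + 1 + k.1, hbound k⟩ : Fin N) i
          (R (z ⟨i.1 + 1 + k.1, hbound k⟩ / z i)))⁻¹ := by
    funext k
    set j : Fin N := (⟨i.1 + 1 + k.1, hbound k⟩ : Fin N) with hjdef
    have hij : i ≠ j := Fin.ne_of_val_ne (show i.1 ≠ i.1 + 1 + k.1 by omega)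
    have hx := hcuR k
    have hxinv : (z i / z j)⁻¹ = z j / z i := inv_div _ _
    rw [hxinv] at hx
    have h1 : siteJK i j (R (z i / z j)) * siteJK j i (R (z j / z i))
        = cu k • (1 : StM n N) := by
      rw [siteJK_lop2, siteJK_lop2, ← lop2_swapM i j (R (z j / z i)),
        lop2_mul_lop2 i j hij, hx, lop2_smul, lop2_one i j hij]
    have h2 : (cu k)⁻¹ • siteJK i j (R (z i / z j)) * siteJK j i (R (z j / z i)) = 1 := by
      rw [smul_mul_assoc, h1, smul_smul, inv_mul_cancel₀ (hcu0 k), one_smul]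
    have h3 : (siteJK j i (R (z j / z i)))⁻¹ = (cu k)⁻¹ • siteJK i j (R (z i / z j)) :=
      Matrix.inv_eq_left_inv h2
    rw [h3, smul_smul, mul_inv_cancel₀ (hcu0 k), one_smul]
  rw [hfac, pdesc_smul, mul_smul_comm, smul_smul, Aper]
end
end

section
/- Let V be finite-dimensional, R(x) ∈ End(V ⊗ V) invertible, and J ∈ GL(V) satisfying R_{12}(x) J₁ J₂ = J₁ J₂ R_{21}(x) for all x. Then the map χ_J(Y)(x) := J^{-1} Y(x) J is a bijection from solutions of the left reflection equation R_{12}(x/y) K₁(x) R_{21}(xy) K₂(y) = K₂(y) R_{12}(xy) K₁(x) R_{21}(x/y) to solutions of the right reflection equation R_{21}(x/y) K₁(x) R_{12}(xy) K₂(y) = K₂(y) R_{21}(xy) K₁(x) R_{12}(x/y). -/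
open Matrix Kronecker

noncomputable section

lemma swapM_mul' {n : ℕ} (A B : Sq n) : swapM (A * B) = swapM A * swapM B := by
  ext p q
  simp only [swapM, Matrix.of_apply, Matrix.mul_apply, Fintype.sum_prod_type]
  rw [Finset.sum_comm]
lemma swapM_swapM' {n : ℕ} (A : Sq n) : swapM (swapM A) = A := rfl
lemma swapM_kron' {n : ℕ} (A B : MatV n) : swapM (A ⊗ₖ B) = B ⊗ₖ A := by
  ext p q; simp [swapM, kroneckerMap_apply, mul_comm]
lemma k1M_eq_kron' {n : ℕ} (M : MatV n) : k1M M = M ⊗ₖ (1 : MatV n) := by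
  ext p q; simp [k1M, kroneckerMap_apply, Matrix.one_apply, mul_ite]
lemma k2M_eq_kron' {n : ℕ} (M : MatV n) : k2M M = (1 : MatV n) ⊗ₖ M := by
  ext p q; simp [k2M, kroneckerMap_apply, Matrix.one_apply, ite_mul]

lemma conj_eq_iff' {n : ℕ} (C : Sq n) (hC : IsUnit C.det) (A B : Sq n) :
    A = B ↔ C⁻¹ * A * C = C⁻¹ * B * C := by
  constructor
  · intro h; rw [h]
  · intro h
    have := congrArg (fun X => C * X * C⁻¹) h
    simpa [Matrix.mul_assoc, Matrix.mul_nonsing_inv_cancel_left _ _ hC,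
      Matrix.mul_nonsing_inv _ hC] using this

lemma conjMul' {n : ℕ} (C : Sq n) (hC : IsUnit C.det) (A B : Sq n) :
    C⁻¹ * (A * B) * C = (C⁻¹ * A * C) * (C⁻¹ * B * C) := by
  simp [Matrix.mul_assoc, Matrix.mul_nonsing_inv_cancel_left _ _ hC]

/-- `χ_J` is a bijection from solutions of the LRE to solutions of the RRE. -/
theorem stmt10 (n : ℕ) (R : ℂ → Sq n) (J : MatV n)
    (hRinv : ∀ x : ℂ, IsUnit (R x))
    (hJ : IsUnit J)
    (hRJ : ∀ x : ℂ, R x * (J ⊗ₖ J) = (J ⊗ₖ J) * swapM (R x)) :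
    ∀ K : ℂ → MatV n, LREprop R K ↔ RREprop R (fun x => J⁻¹ * K x * J) := by
  intro K
  have hdetJ : IsUnit J.det := (Matrix.isUnit_iff_isUnit_det J).mp hJ
  have hJJ : J * J⁻¹ = 1 := Matrix.mul_nonsing_inv J hdetJ
  have hJJ' : J⁻¹ * J = 1 := Matrix.nonsing_inv_mul J hdetJ
  set C : Sq n := J ⊗ₖ J with hCdef
  have hdetC : IsUnit C.det := by
    rw [hCdef, Matrix.det_kronecker]
    exact (hdetJ.pow _).mul (hdetJ.pow _)
  have hCinv : C⁻¹ = J⁻¹ ⊗ₖ J⁻¹ := by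
    apply Matrix.inv_eq_right_inv
    rw [hCdef, ← Matrix.mul_kronecker_mul, hJJ, Matrix.one_kronecker_one]
  have h1 : ∀ z, C⁻¹ * R z * C = swapM (R z) := by
    intro z
    rw [Matrix.mul_assoc, hRJ z, ← Matrix.mul_assoc, Matrix.nonsing_inv_mul _ hdetC, one_mul]
  have hswap : ∀ z, swapM (R z) * C = C * R z := by
    intro z
    have := congrArg swapM (hRJ z)
    rw [swapM_mul', swapM_mul', swapM_swapM', hCdef, swapM_kron'] at this
    exact this
  have h2 : ∀ z, C⁻¹ * swapM (R z) * C = R z := by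
    intro z
    rw [Matrix.mul_assoc, hswap z, ← Matrix.mul_assoc, Matrix.nonsing_inv_mul _ hdetC, one_mul]
  have h3 : ∀ M : MatV n, C⁻¹ * k1M M * C = k1M (J⁻¹ * M * J) := by
    intro M
    rw [hCinv, hCdef, k1M_eq_kron', k1M_eq_kron', ← Matrix.mul_kronecker_mul,
      ← Matrix.mul_kronecker_mul, Matrix.mul_one, hJJ']
  have h4 : ∀ M : MatV n, C⁻¹ * k2M M * C = k2M (J⁻¹ * M * J) := by
    intro M
    rw [hCinv, hCdef, k2M_eq_kron', k2M_eq_kron', ← Matrix.mul_kronecker_mul,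
      ← Matrix.mul_kronecker_mul, Matrix.mul_one, hJJ']
  unfold LREprop RREprop
  refine forall_congr' fun x => forall_congr' fun y => ?_
  rw [conj_eq_iff' C hdetC]
  rw [conjMul' C hdetC, conjMul' C hdetC, conjMul' C hdetC, h1, h2, h3, h4,
      conjMul' C hdetC, conjMul' C hdetC, conjMul' C hdetC, h1, h2, h3, h4]
end
end
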